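/- For all positive integers k and l: 2(k² + l²)² − 6(k² + l²) − 20kl + 4 + 40kl/(k² + l²) ≥ 0, with equality if and only if (k, l) ∈ {(1,1), (1,2), (2,1)}. -/
import Mathlib

lemma auxF (k l : ℤ) (hk : 1 ≤ k) (hl : 1 ≤ l) :
    0 ≤ 2*(k^2+l^2)^3 - 6*(k^2+l^2)^2 + 4*(k^2+l^2) - 20*k*l*(k^2+l^2) + 40*k*l ∧
    (2*(k^2+l^2)^3 - 6*(k^2+l^2)^2 + 4*(k^2+l^2) - 20*k*l*(k^2+l^2) + 40*k*l = 0 ↔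
      (k = 1 ∧ l = 1) ∨ (k = 1 ∧ l = 2) ∨ (k = 2 ∧ l = 1)) := by
  rcases eq_or_ne k l with rfl | hne
  · rcases hk.eq_or_lt with rfl | hk2
    · norm_num
    · have h2 : 2 ≤ k := hk2
      have hk4 : 4 ≤ k^2 := by nlinarith
      have hpos : 0 < 16*(k^2)*((k^2)-1)*((k^2)-3) := by
        have a : (0:ℤ) < k^2 := by linarith
        have b : (0:ℤ) < k^2 - 1 := by linarith
        have c : (0:ℤ) < k^2 - 3 := by linarith
        exact mul_pos (mul_pos (by linarith) b) c
      have keq : 2*(k^2+k^2)^3 - 6*(k^2+k^2)^2 + 4*(k^2+k^2) - 20*k*k*(k^2+k^2) + 40*k*k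
          = 16*(k^2)*((k^2)-1)*((k^2)-3) := by ring
      refine ⟨by rw [keq]; linarith, ⟨fun h => absurd h (by rw [keq]; exact hpos.ne'), fun h => by omega⟩⟩
  · have hkl : k - l ≠ 0 := sub_ne_zero.mpr hne
    have habs : 1 ≤ |k - l| := Int.one_le_abs hkl
    have h1 : 1 ≤ (k - l)^2 := by nlinarith [sq_abs (k - l)]
    have hsum : 3 ≤ k + l := by omega
    have h5 : 5 ≤ k^2 + l^2 := by nlinarith
    have key : 2*(k^2+l^2)^3 - 6*(k^2+l^2)^2 + 4*(k^2+l^2) - 20*k*l*(k^2+l^2) + 40*k*l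
        = 2*((k^2+l^2)-1)*((k^2+l^2)-2)*((k^2+l^2)-5)
          + 10*((k^2+l^2)-2)*((k-l)^2-1) := by ring
    have t1 : 0 ≤ 2*((k^2+l^2)-1)*((k^2+l^2)-2)*((k^2+l^2)-5) := by
      have a1 : (0:ℤ) ≤ (k^2+l^2) - 1 := by linarith
      have a2 : (0:ℤ) ≤ (k^2+l^2) - 2 := by linarith
      have a5 : (0:ℤ) ≤ (k^2+l^2) - 5 := by linarith
      positivity
    have t2 : 0 ≤ 10*((k^2+l^2)-2)*((k-l)^2-1) := by
      have a2 : (0:ℤ) ≤ (k^2+l^2) - 2 := by linarith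
      have a1 : (0:ℤ) ≤ (k-l)^2 - 1 := by linarith
      positivity
    constructor
    · rw [key]; linarith
    · constructor
      · intro h
        rw [key] at h
        have e1 : ((k^2+l^2)-1) * ((k^2+l^2)-2) * ((k^2+l^2)-5) = 0 := by linarith
        have hs5 : k^2 + l^2 = 5 := by
          rcases mul_eq_zero.mp e1 with e2 | e3
          · rcases mul_eq_zero.mp e2 with e4 | e4 <;> linarith
          · linarith
        have hk2 : k ≤ 2 := by nlinarith [sq_nonneg (k - 3)]
        have hl2 : l ≤ 2 := by nlinarith [sq_nonneg (l - 3)]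
        clear key t1 t2 h e1 h1 habs hkl h5 hsum
        interval_cases k <;> interval_cases l <;> simp_all
      · rintro (⟨rfl, rfl⟩ | ⟨rfl, rfl⟩ | ⟨rfl, rfl⟩) <;> norm_num

theorem key_discrete_inequality (k l : ℕ) (hk : 1 ≤ k) (hl : 1 ≤ l) :
    0 ≤ 2*((k:ℝ)^2+(l:ℝ)^2)^2 - 6*((k:ℝ)^2+(l:ℝ)^2) - 20*(k:ℝ)*(l:ℝ) + 4
        + 40*(k:ℝ)*(l:ℝ)/((k:ℝ)^2+(l:ℝ)^2)
    ∧ (2*((k:ℝ)^2+(l:ℝ)^2)^2 - 6*((k:ℝ)^2+(l:ℝ)^2) - 20*(k:ℝ)*(l:ℝ) + 4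
        + 40*(k:ℝ)*(l:ℝ)/((k:ℝ)^2+(l:ℝ)^2) = 0
      ↔ (k, l) = (1, 1) ∨ (k, l) = (1, 2) ∨ (k, l) = (2, 1)) := by
  have hk' : (1:ℤ) ≤ (k:ℤ) := by exact_mod_cast hk
  have hl' : (1:ℤ) ≤ (l:ℤ) := by exact_mod_cast hl
  obtain ⟨h1, h2⟩ := auxF (k:ℤ) (l:ℤ) hk' hl'
  have hk0 : (1:ℝ) ≤ (k:ℝ) := by exact_mod_cast hk
  have hl0 : (1:ℝ) ≤ (l:ℝ) := by exact_mod_cast hl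
  have hs : (0:ℝ) < (k:ℝ)^2+(l:ℝ)^2 := by positivity
  have hF : ((2*((k:ℤ)^2+(l:ℤ)^2)^3 - 6*((k:ℤ)^2+(l:ℤ)^2)^2 + 4*((k:ℤ)^2+(l:ℤ)^2)
        - 20*(k:ℤ)*(l:ℤ)*((k:ℤ)^2+(l:ℤ)^2) + 40*(k:ℤ)*(l:ℤ) : ℤ) : ℝ)
      = (2*((k:ℝ)^2+(l:ℝ)^2)^2 - 6*((k:ℝ)^2+(l:ℝ)^2) - 20*(k:ℝ)*(l:ℝ) + 4
        + 40*(k:ℝ)*(l:ℝ)/((k:ℝ)^2+(l:ℝ)^2)) * ((k:ℝ)^2+(l:ℝ)^2) := by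
    push_cast
    field_simp
    ring
  have h1' : (0:ℝ) ≤ (2*((k:ℝ)^2+(l:ℝ)^2)^2 - 6*((k:ℝ)^2+(l:ℝ)^2) - 20*(k:ℝ)*(l:ℝ) + 4
        + 40*(k:ℝ)*(l:ℝ)/((k:ℝ)^2+(l:ℝ)^2)) * ((k:ℝ)^2+(l:ℝ)^2) := by
    rw [← hF]; exact_mod_cast h1
  constructor
  · exact le_of_mul_le_mul_right (by rw [zero_mul]; exact h1') hs
  · constructor
    · intro hE
      have hzero : ((2*((k:ℤ)^2+(l:ℤ)^2)^3 - 6*((k:ℤ)^2+(l:ℤ)^2)^2 + 4*((k:ℤ)^2+(l:ℤ)^2)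
          - 20*(k:ℤ)*(l:ℤ)*((k:ℤ)^2+(l:ℤ)^2) + 40*(k:ℤ)*(l:ℤ) : ℤ) : ℝ) = 0 := by
        rw [hF, hE, zero_mul]
      have hzero' : (2*((k:ℤ)^2+(l:ℤ)^2)^3 - 6*((k:ℤ)^2+(l:ℤ)^2)^2 + 4*((k:ℤ)^2+(l:ℤ)^2)
          - 20*(k:ℤ)*(l:ℤ)*((k:ℤ)^2+(l:ℤ)^2) + 40*(k:ℤ)*(l:ℤ) : ℤ) = 0 := by
        exact_mod_cast hzero
      rcases h2.mp hzero' with ⟨ha, hb⟩ | ⟨ha, hb⟩ | ⟨ha, hb⟩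
      · left; simp only [Prod.mk.injEq]; omega
      · right; left; simp only [Prod.mk.injEq]; omega
      · right; right; simp only [Prod.mk.injEq]; omega
    · intro h
      have hzero' : (2*((k:ℤ)^2+(l:ℤ)^2)^3 - 6*((k:ℤ)^2+(l:ℤ)^2)^2 + 4*((k:ℤ)^2+(l:ℤ)^2)
          - 20*(k:ℤ)*(l:ℤ)*((k:ℤ)^2+(l:ℤ)^2) + 40*(k:ℤ)*(l:ℤ) : ℤ) = 0 := by
        apply h2.mpr
        rcases h with h | h | h <;> simp only [Prod.mk.injEq] at h <;> [left; (right; left); (right; right)] <;>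
          exact ⟨by exact_mod_cast congrArg (Nat.cast : ℕ → ℤ) h.1, by exact_mod_cast congrArg (Nat.cast : ℕ → ℤ) h.2⟩
      have : (2*((k:ℝ)^2+(l:ℝ)^2)^2 - 6*((k:ℝ)^2+(l:ℝ)^2) - 20*(k:ℝ)*(l:ℝ) + 4
          + 40*(k:ℝ)*(l:ℝ)/((k:ℝ)^2+(l:ℝ)^2)) * ((k:ℝ)^2+(l:ℝ)^2) = 0 := by
        rw [← hF]; exact_mod_cast hzero'
      rcases mul_eq_zero.mp this with h' | h'
      · exact h'
      · exact absurd h' hs.ne'
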